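/- Let d ≥ 1 be an integer, α ∈ (0,2), and let 0 < c₁ ≤ c₂. Suppose p : (0,∞) × ℝ^d × ℝ^d → ℝ is measurable in its last variable and satisfies c₁·min(t^(−d/α), t/|x−y|^(d+α)) ≤ p(t,x,y) ≤ c₂·min(t^(−d/α), t/|x−y|^(d+α)) for all t > 0 and x, y ∈ ℝ^d. Then there is a constant C > 0 (depending only on d, α, c₁, c₂) such that for every t > 0, every x, y ∈ ℝ^d, and every bounded measurable f : ℝ^d → [0,∞), ∫_{ℝ^d} f(z)·p(t,x,z) dz ≤ C·(1 + |x−y|/t^(1/α))^(d+α) · ∫_{ℝ^d} f(z)·p(t,y,z) dz. -/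

import Mathlib

open Real MeasureTheory

lemma aux_min_le (A t k r : ℝ) (hA : 0 < A) (ht : 0 < t) (hk : 0 < k) (hr : 0 ≤ r) :
    min A (t / r ^ k) ≤ 2 ^ k * max A t * (1 + r) ^ (-k) := by
  have h2k : (0:ℝ) < 2 ^ k := rpow_pos_of_pos two_pos k
  have hM : 0 < max A t := lt_max_of_lt_left hA
  rcases le_total r 1 with hr1 | hr1
  · have h2 : (1 + r) ^ k ≤ 2 ^ k := rpow_le_rpow (by linarith) (by linarith) hk.le
    have hP : (0:ℝ) < (1 + r) ^ k := rpow_pos_of_pos (by linarith) k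
    have h3 : (2:ℝ) ^ (-k) ≤ (1 + r) ^ (-k) := by
      rw [Real.rpow_neg (by norm_num), Real.rpow_neg (by linarith)]
      exact inv_anti₀ hP h2
    have h4 : (2:ℝ) ^ k * (2:ℝ) ^ (-k) = 1 := by
      rw [← Real.rpow_add two_pos]; norm_num
    calc min A (t / r ^ k) ≤ A := min_le_left _ _
      _ ≤ max A t := le_max_left _ _
      _ = 2 ^ k * max A t * 2 ^ (-k) := by
          rw [mul_comm ((2:ℝ)^k) (max A t), mul_assoc, h4, mul_one]
      _ ≤ 2 ^ k * max A t * (1 + r) ^ (-k) :=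
          mul_le_mul_of_nonneg_left h3 (by positivity)
  · have hr0 : (0:ℝ) < r := by linarith
    have hrk : (0:ℝ) < r ^ k := rpow_pos_of_pos hr0 k
    have h2 : (1 + r) ^ k ≤ 2 ^ k * r ^ k := by
      have := rpow_le_rpow (by linarith : (0:ℝ) ≤ 1 + r) (by linarith : 1 + r ≤ 2 * r) hk.le
      rwa [Real.mul_rpow (by norm_num) hr0.le] at this
    have hP : (0:ℝ) < (1 + r) ^ k := rpow_pos_of_pos (by linarith) k
    have h3 : ((2:ℝ) ^ k * r ^ k)⁻¹ ≤ (1 + r) ^ (-k) := by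
      rw [Real.rpow_neg (by linarith)]
      exact inv_anti₀ hP h2
    calc min A (t / r ^ k) ≤ t / r ^ k := min_le_right _ _
      _ = 2 ^ k * t * (2 ^ k * r ^ k)⁻¹ := by field_simp
      _ ≤ 2 ^ k * max A t * (1 + r) ^ (-k) := by
          apply mul_le_mul (by gcongr; exact le_max_right _ _) h3 (by positivity) (by positivity)

lemma aux_integrable (d : ℕ) (k A t : ℝ) (hk : (d:ℝ) < k) (hA : 0 < A) (ht : 0 < t)
    (u : EuclideanSpace ℝ (Fin d)) :
    Integrable (fun z => min A (t / ‖u - z‖ ^ k)) := by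
  have hk0 : 0 < k := lt_of_le_of_lt (Nat.cast_nonneg d) hk
  apply Integrable.mono' (g := fun z : EuclideanSpace ℝ (Fin d) =>
    2 ^ k * max A t * (1 + ‖z - u‖) ^ (-k))
  · have h : Integrable (fun z : EuclideanSpace ℝ (Fin d) => (1 + ‖z‖) ^ (-k)) :=
      integrable_one_add_norm (by simpa using hk)
    exact (h.comp_sub_right u).const_mul _
  · apply Measurable.aestronglyMeasurable
    exact measurable_const.min (measurable_const.div
      ((Real.continuous_rpow_const hk0.le).measurable.comp
        (measurable_const.sub measurable_id).norm))
  · filter_upwards with z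
    rw [Real.norm_eq_abs, abs_of_nonneg (le_min hA.le (by positivity))]
    rw [norm_sub_rev u z]
    exact aux_min_le A t k ‖z - u‖ hA ht hk0 (norm_nonneg _)

theorem stable_harnack_inequality
    (d : ℕ) (hd : 1 ≤ d) (α : ℝ) (hα : α ∈ Set.Ioo (0 : ℝ) 2)
    (c₁ c₂ : ℝ) (hc₁ : 0 < c₁) (hc₁₂ : c₁ ≤ c₂)
    (p : ℝ → EuclideanSpace ℝ (Fin d) → EuclideanSpace ℝ (Fin d) → ℝ)
    (hmeas : ∀ t x, Measurable (p t x))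
    (hlow : ∀ t > (0 : ℝ), ∀ x y,
      c₁ * min (t ^ (-(d : ℝ) / α)) (t / ‖x - y‖ ^ ((d : ℝ) + α)) ≤ p t x y)
    (hup : ∀ t > (0 : ℝ), ∀ x y,
      p t x y ≤ c₂ * min (t ^ (-(d : ℝ) / α)) (t / ‖x - y‖ ^ ((d : ℝ) + α))) :
    ∃ C > (0 : ℝ), ∀ t > (0 : ℝ), ∀ x y : EuclideanSpace ℝ (Fin d),
      ∀ f : EuclideanSpace ℝ (Fin d) → ℝ, Measurable f → (∀ z, 0 ≤ f z) →
      (∃ M, ∀ z, f z ≤ M) →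
      ∫ z, f z * p t x z ≤
        C * (1 + ‖x - y‖ / t ^ (1 / α)) ^ ((d : ℝ) + α) * ∫ z, f z * p t y z := by
  obtain ⟨hα0, hα2⟩ := hα
  have hc₂ : 0 < c₂ := lt_of_lt_of_le hc₁ hc₁₂
  have hk0 : (0:ℝ) < (d:ℝ) + α := by positivity
  have hdk : (d:ℝ) < (d:ℝ) + α := by linarith
  refine ⟨c₂ / c₁, div_pos hc₂ hc₁, ?_⟩
  intro t ht x y f hf hf0 hbd
  obtain ⟨M, hM⟩ := hbd
  have hM0 : 0 ≤ M := le_trans (hf0 0) (hM 0)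
  have hs0 : 0 < t ^ (1/α) := rpow_pos_of_pos ht _
  have htpos : 0 < t ^ (-(d:ℝ)/α) := rpow_pos_of_pos ht _
  have hts : t ^ (-(d:ℝ)/α) = t / (t ^ (1/α)) ^ ((d:ℝ)+α) := by
    have h1 : (t ^ (1/α)) ^ ((d:ℝ)+α) = t ^ ((1/α) * ((d:ℝ)+α)) :=
      (Real.rpow_mul ht.le _ _).symm
    rw [h1, eq_div_iff (ne_of_gt (rpow_pos_of_pos ht _)), ← Real.rpow_add ht]
    rw [show -(d:ℝ)/α + (1/α)*((d:ℝ)+α) = 1 by field_simp; ring, Real.rpow_one]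
  have hp0 : ∀ u z, 0 ≤ p t u z := fun u z =>
    le_trans (mul_nonneg hc₁.le (le_min htpos.le (by positivity))) (hlow t ht u z)
  have key_int : ∀ u, Integrable (fun z => f z * p t u z) := by
    intro u
    apply Integrable.mono'
      ((aux_integrable d ((d:ℝ)+α) (t ^ (-(d:ℝ)/α)) t hdk htpos ht u).const_mul (M * c₂))
    · exact (hf.mul (hmeas t u)).aestronglyMeasurable
    · filter_upwards with z
      rw [Real.norm_eq_abs, abs_of_nonneg (mul_nonneg (hf0 z) (hp0 u z))]
      calc f z * p t u z
          ≤ M * (c₂ * min (t ^ (-(d:ℝ)/α)) (t / ‖u - z‖ ^ ((d:ℝ)+α))) :=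
            mul_le_mul (hM z) (hup t ht u z) (hp0 u z) hM0
        _ = M * c₂ * min (t ^ (-(d:ℝ)/α)) (t / ‖u - z‖ ^ ((d:ℝ)+α)) := by ring
  have hB1 : (1:ℝ) ≤ 1 + ‖x - y‖ / t ^ (1/α) :=
    le_add_of_nonneg_right (by positivity)
  set B : ℝ := (1 + ‖x - y‖ / t ^ (1/α)) ^ ((d:ℝ)+α) with hBdef
  have hB0 : 0 < B := rpow_pos_of_pos (by linarith) _
  have key : ∀ z, z ≠ y → f z * p t x z ≤ (c₂/c₁ * B) * (f z * p t y z) := by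
    intro z hz
    have hMx : 0 < max (t ^ (1/α)) ‖x - z‖ := lt_max_of_lt_left hs0
    have hMy : 0 < max (t ^ (1/α)) ‖y - z‖ := lt_max_of_lt_left hs0
    have hMxk : 0 < (max (t ^ (1/α)) ‖x - z‖) ^ ((d:ℝ)+α) := rpow_pos_of_pos hMx _
    have hMyk : 0 < (max (t ^ (1/α)) ‖y - z‖) ^ ((d:ℝ)+α) := rpow_pos_of_pos hMy _
    have hxz : p t x z ≤ c₂ * (t / (max (t ^ (1/α)) ‖x - z‖) ^ ((d:ℝ)+α)) := by
      refine le_trans (hup t ht x z) (mul_le_mul_of_nonneg_left ?_ hc₂.le)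
      rw [hts]
      rcases max_choice (t ^ (1/α)) ‖x - z‖ with h | h <;> rw [h]
      · exact min_le_left _ _
      · exact min_le_right _ _
    have hyz : c₁ * (t / (max (t ^ (1/α)) ‖y - z‖) ^ ((d:ℝ)+α)) ≤ p t y z := by
      refine le_trans (mul_le_mul_of_nonneg_left ?_ hc₁.le) (hlow t ht y z)
      rw [hts]
      refine le_min ?_ ?_
      · gcongr
        exact le_max_left _ _
      · have hry : 0 < ‖y - z‖ := by
          rw [norm_pos_iff]
          intro h
          exact hz (sub_eq_zero.mp h).symm
        gcongr
        exact le_max_right _ _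
    have h3 : max (t ^ (1/α)) ‖y - z‖
        ≤ (1 + ‖x - y‖ / t ^ (1/α)) * max (t ^ (1/α)) ‖x - z‖ := by
      have hxy : ‖y - z‖ ≤ ‖x - z‖ + ‖x - y‖ := by
        calc ‖y - z‖ = ‖(x - z) - (x - y)‖ := by congr 1; abel
          _ ≤ ‖x - z‖ + ‖x - y‖ := norm_sub_le _ _
      have h1 : ‖x - y‖ = (‖x - y‖ / t ^ (1/α)) * t ^ (1/α) := by field_simp
      have h2 : t ^ (1/α) ≤ max (t ^ (1/α)) ‖x - z‖ := le_max_left _ _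
      have h2' : ‖x - z‖ ≤ max (t ^ (1/α)) ‖x - z‖ := le_max_right _ _
      have hb0 : 0 ≤ ‖x - y‖ / t ^ (1/α) := by positivity
      apply max_le
      · nlinarith
      · nlinarith
    have h4 : (max (t ^ (1/α)) ‖y - z‖) ^ ((d:ℝ)+α)
        ≤ B * (max (t ^ (1/α)) ‖x - z‖) ^ ((d:ℝ)+α) := by
      have := Real.rpow_le_rpow hMy.le h3 hk0.le
      rwa [Real.mul_rpow (by linarith) hMx.le] at this
    have h5 : t / (max (t ^ (1/α)) ‖x - z‖) ^ ((d:ℝ)+α)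
        ≤ B * (t / (max (t ^ (1/α)) ‖y - z‖) ^ ((d:ℝ)+α)) := by
      rw [mul_div_assoc', div_le_div_iff₀ hMxk hMyk]
      calc t * (max (t ^ (1/α)) ‖y - z‖) ^ ((d:ℝ)+α)
          ≤ t * (B * (max (t ^ (1/α)) ‖x - z‖) ^ ((d:ℝ)+α)) :=
            mul_le_mul_of_nonneg_left h4 ht.le
        _ = B * t * (max (t ^ (1/α)) ‖x - z‖) ^ ((d:ℝ)+α) := by ring
    have h6 : p t x z ≤ (c₂/c₁ * B) * p t y z := by
      calc p t x z ≤ c₂ * (t / (max (t ^ (1/α)) ‖x - z‖) ^ ((d:ℝ)+α)) := hxz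
        _ ≤ c₂ * (B * (t / (max (t ^ (1/α)) ‖y - z‖) ^ ((d:ℝ)+α))) :=
            mul_le_mul_of_nonneg_left h5 hc₂.le
        _ = (c₂/c₁ * B) * (c₁ * (t / (max (t ^ (1/α)) ‖y - z‖) ^ ((d:ℝ)+α))) := by
            field_simp
        _ ≤ (c₂/c₁ * B) * p t y z :=
            mul_le_mul_of_nonneg_left hyz (by positivity)
    calc f z * p t x z ≤ f z * ((c₂/c₁ * B) * p t y z) :=
          mul_le_mul_of_nonneg_left h6 (hf0 z)
      _ = (c₂/c₁ * B) * (f z * p t y z) := by ring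
  have hae : ∀ᵐ z : EuclideanSpace ℝ (Fin d),
      f z * p t x z ≤ (c₂/c₁ * B) * (f z * p t y z) := by
    have : Nontrivial (EuclideanSpace ℝ (Fin d)) := by
      apply Module.nontrivial_of_finrank_pos (R := ℝ)
      simpa using (show 0 < d by omega)
    have h0 : (volume : Measure (EuclideanSpace ℝ (Fin d))) {y} = 0 := measure_singleton y
    rw [ae_iff]
    refine measure_mono_null (fun z hz => ?_) h0
    simp only [Set.mem_setOf_eq, not_le] at hz
    simp only [Set.mem_singleton_iff]
    by_contra hne
    exact absurd (key z hne) (not_le.mpr hz)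
  have hmain := integral_mono_ae (key_int x) ((key_int y).const_mul _) hae
  rw [integral_const_mul] at hmain
  calc ∫ z, f z * p t x z ≤ (c₂/c₁ * B) * ∫ z, f z * p t y z := hmain
    _ = c₂/c₁ * B * ∫ z, f z * p t y z := by ring
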